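/- Let (R,m,k) be an artinian local ring and let E be an injective envelope of k over R with embedding ι : k → E. Then m·(E/ι(k)) = 0 if and only if m² = 0. -/

import Mathlib

open IsLocalRing

universe u

/-- `(E, ι)` is an injective envelope of the residue field `k` over `R`: `E` is injective,
`ι : k → E` is injective, and the image of `ι` is essential in `E`. -/
def IsInjectiveEnvelopeOfResidueField (R : Type u) [CommRing R] [IsLocalRing R]
    (E : Type u) [AddCommGroup E] [Module R E] (ι : ResidueField R →ₗ[R] E) : Prop :=
  Module.Injective R E ∧ Function.Injective ι ∧
    ∀ N : Submodule R E, N ≠ ⊥ → N ⊓ LinearMap.range ι ≠ ⊥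

/-- Any nonzero element of an artinian local ring has a nonzero multiple killed by the
maximal ideal (a "socle" element). -/
lemma aux_socle_exists (R : Type u) [CommRing R] [IsArtinianRing R] [IsLocalRing R]
    (c : R) (hc : c ≠ 0) :
    ∃ t : R, t * c ≠ 0 ∧ ∀ u ∈ maximalIdeal R, u * (t * c) = 0 := by
  classical
  have hnil : IsNilpotent (maximalIdeal R) := by
    rw [← IsLocalRing.jacobson_eq_maximalIdeal ⊥ bot_ne_top]
    exact IsArtinianRing.isNilpotent_jacobson_bot
  obtain ⟨n, hn⟩ := hnil
  have hP : ∃ j : ℕ, ∀ a ∈ (maximalIdeal R) ^ j, a * c = 0 := by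
    refine ⟨n, fun a ha => ?_⟩
    rw [hn] at ha
    simpa using mul_eq_zero_of_left (by simpa using ha) c
  set j := Nat.find hP with hj
  have hjspec : ∀ a ∈ (maximalIdeal R) ^ j, a * c = 0 := Nat.find_spec hP
  have hj0 : j ≠ 0 := by
    intro h0
    have : (1 : R) ∈ (maximalIdeal R) ^ j := by
      rw [h0, pow_zero, Ideal.one_eq_top]; trivial
    exact hc (by simpa using hjspec 1 this)
  obtain ⟨j', hjj⟩ := Nat.exists_eq_succ_of_ne_zero hj0
  rw [hjj] at hjspec
  have hlt : ¬ ∀ a ∈ (maximalIdeal R) ^ j', a * c = 0 :=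
    Nat.find_min hP (by omega)
  push_neg at hlt
  obtain ⟨t, ht, htc⟩ := hlt
  refine ⟨t, htc, fun u hu => ?_⟩
  have : t * u ∈ (maximalIdeal R) ^ (j' + 1) := by
    rw [pow_succ]
    exact Ideal.mul_mem_mul ht hu
  have h0 := hjspec (t * u) this
  calc u * (t * c) = (t * u) * c := by ring
    _ = 0 := h0

/-- An injective envelope of the residue field is a faithful module. -/
lemma aux_faithful (R : Type u) [CommRing R] [IsArtinianRing R] [IsLocalRing R]
    (E : Type u) [AddCommGroup E] [Module R E] (ι : ResidueField R →ₗ[R] E)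
    (hE : IsInjectiveEnvelopeOfResidueField R E ι)
    (c : R) (hcE : ∀ e : E, c • e = 0) : c = 0 := by
  by_contra hc
  obtain ⟨t, htc, hsoc⟩ := aux_socle_exists R c hc
  set d := t * c with hd
  -- build `f : k →ₗ[R] R`, `mk a ↦ a * d`; it is injective
  have hker : maximalIdeal R ≤ LinearMap.ker (LinearMap.toSpanSingleton R R d) :=
    fun u hu => by simpa [LinearMap.mem_ker, smul_eq_mul] using hsoc u hu
  set f : ResidueField R →ₗ[R] R :=
    Submodule.liftQ (maximalIdeal R) (LinearMap.toSpanSingleton R R d) hker with hf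
  have hfmk : ∀ a : R, f (Ideal.Quotient.mk (maximalIdeal R) a) = a * d := by
    intro a
    simp [hf, LinearMap.toSpanSingleton_apply, smul_eq_mul]
    rfl
  have hfinj : Function.Injective f := by
    rw [← LinearMap.ker_eq_bot, eq_bot_iff]
    intro y hy
    obtain ⟨a, rfl⟩ := Ideal.Quotient.mk_surjective y
    have had : a * d = 0 := by
      have := (LinearMap.mem_ker).mp hy
      rwa [hfmk] at this
    have ham : a ∈ maximalIdeal R := by
      by_contra ham
      have : IsUnit a := IsLocalRing.notMem_maximalIdeal.mp ham
      obtain ⟨v, rfl⟩ := this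
      have : d = 0 := by
        have := congrArg (fun x => (v.inv : R) * x) had
        simpa [← mul_assoc, Units.inv_mul] using this
      exact htc this
    exact (Submodule.mem_bot R).mpr (Ideal.Quotient.eq_zero_iff_mem.mpr ham)
  obtain ⟨h, hh⟩ := hE.1.out f hfinj ι
  have h1 : h d ≠ 0 := by
    have : h (f (Ideal.Quotient.mk (maximalIdeal R) 1)) =
        ι (Ideal.Quotient.mk (maximalIdeal R) 1) := hh _
    rw [hfmk, one_mul] at this
    rw [this]
    intro h0
    have : (Ideal.Quotient.mk (maximalIdeal R) 1 : ResidueField R) = 0 := by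
      apply hE.2.1
      exact h0.trans (map_zero ι).symm
    have : (1 : R) ∈ maximalIdeal R := Ideal.Quotient.eq_zero_iff_mem.mp this
    exact (IsLocalRing.maximalIdeal.isMaximal R).ne_top (Ideal.eq_top_of_isUnit_mem _ this isUnit_one)
  apply h1
  have : h d = d • h 1 := by
    rw [← map_smul, smul_eq_mul, mul_one]
  rw [this, hd, mul_comm, mul_smul, hcE]

theorem stmt10 (R : Type u) [CommRing R] [IsArtinianRing R] [IsLocalRing R]
    (E : Type u) [AddCommGroup E] [Module R E] (ι : ResidueField R →ₗ[R] E)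
    (hE : IsInjectiveEnvelopeOfResidueField R E ι) :
    (∀ r ∈ maximalIdeal R, ∀ x : E ⧸ LinearMap.range ι, r • x = 0) ↔
      (maximalIdeal R) ^ 2 = ⊥ := by
  constructor
  · intro h
    -- every `r ∈ m` sends `E` into `range ι`
    have hrange : ∀ r ∈ maximalIdeal R, ∀ e : E, r • e ∈ LinearMap.range ι := by
      intro r hr e
      have := h r hr (Submodule.Quotient.mk e)
      rw [← Submodule.Quotient.mk_smul] at this
      exact (Submodule.Quotient.mk_eq_zero _).mp this
    rw [pow_two, eq_bot_iff, Ideal.mul_le]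
    intro r hr s hs
    rw [Submodule.mem_bot]
    apply aux_faithful R E ι hE
    intro e
    obtain ⟨y, hy⟩ := hrange s hs e
    have hry : r • y = 0 := by
      rw [Algebra.smul_def,
        show algebraMap R (ResidueField R) r = 0 from Ideal.Quotient.eq_zero_iff_mem.mpr hr,
        zero_mul]
    calc (r * s) • e = r • (s • e) := by rw [mul_smul]
      _ = r • ι y := by rw [hy]
      _ = ι (r • y) := (map_smul ι r y).symm
      _ = 0 := by rw [hry, map_zero]
  · intro h2 r hr x
    obtain ⟨e, rfl⟩ := Submodule.Quotient.mk_surjective _ x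
    rw [← Submodule.Quotient.mk_smul, Submodule.Quotient.mk_eq_zero]
    -- `m` kills `r • e` since `m² = 0`
    have hkill : ∀ s ∈ maximalIdeal R, s • (r • e) = (0 : E) := by
      intro s hs
      have : s * r ∈ (maximalIdeal R) ^ 2 := by
        rw [pow_two]; exact Ideal.mul_mem_mul hs hr
      rw [h2, Submodule.mem_bot] at this
      rw [← mul_smul, this, zero_smul]
    by_cases h0 : r • e = 0
    · rw [h0]; exact Submodule.zero_mem _
    · have hN : Submodule.span R {r • e} ≠ ⊥ := by
        simpa [Submodule.span_singleton_eq_bot] using h0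
      have := hE.2.2 _ hN
      rw [Submodule.ne_bot_iff] at this
      obtain ⟨y, ⟨hyN, hyι⟩, hy0⟩ := this
      obtain ⟨a, rfl⟩ := Submodule.mem_span_singleton.mp hyN
      have ham : a ∉ maximalIdeal R := by
        intro ham
        exact hy0 (hkill a ham)
      have haU : IsUnit a := IsLocalRing.notMem_maximalIdeal.mp ham
      obtain ⟨v, rfl⟩ := haU
      have : r • e = (v.inv : R) • ((v : R) • (r • e)) := by
        rw [← mul_smul, v.inv_val, one_smul]
      rw [this]
      exact Submodule.smul_mem _ _ hyι
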